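/- Let f be a gross substitutes function and let c be generic with respect to f. Let α', α ∈ C_{f,c} be neighboring critical values, i.e., α' < α and (α', α) ∩ C_{f,c} = ∅. Then there exist sets S ∈ D*_{f,c}(α) and S' ∈ D*_{f,c}(α') such that either (i) S' = S \ {a} for some a ∈ S, or (ii) S' = (S \ {a1}) ∪ {a2} for some a1 ∈ S and a2 ∉ S with c(a2) < c(a1). -/

import Mathlib

open Finset

/-- The agent's demand at contract `α`: sets maximizing `α·f(S) − c(S)`. -/
def Demand (n : ℕ) (f : Finset (Fin n) → ℝ) (c : Fin n → ℝ) (α : ℝ) :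
    Set (Finset (Fin n)) :=
  {S | ∀ T : Finset (Fin n), α * f T - ∑ a ∈ T, c a ≤ α * f S - ∑ a ∈ S, c a}

/-- `V_{f,c}(α)`: the maximal value of `f` over the demand at `α`. -/
noncomputable def Vfc (n : ℕ) (f : Finset (Fin n) → ℝ) (c : Fin n → ℝ) (α : ℝ) : ℝ :=
  sSup (f '' Demand n f c α)

/-- The critical set `C_{f,c}`. -/
def Critical (n : ℕ) (f : Finset (Fin n) → ℝ) (c : Fin n → ℝ) : Set ℝ :=
  {α | 0 < α ∧ α ≤ 1 ∧
    ∀ ε : ℝ, 0 < ε → ε ≤ α → Vfc n f c (α - ε) ≠ Vfc n f c α}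

/-- `f` is a gross substitutes function. -/
def GrossSubstitutes (n : ℕ) (f : Finset (Fin n) → ℝ) : Prop :=
  ∀ p q : Fin n → ℝ, (∀ i, 0 ≤ p i) → (∀ i, p i ≤ q i) →
    ∀ S : Finset (Fin n),
      (∀ S' : Finset (Fin n), f S' - ∑ i ∈ S', p i ≤ f S - ∑ i ∈ S, p i) →
      ∃ T : Finset (Fin n),
        (∀ T' : Finset (Fin n), f T' - ∑ i ∈ T', q i ≤ f T - ∑ i ∈ T, q i) ∧
        ∀ i ∈ S, q i = p i → i ∈ T

/-- Cost extended to `A ∪ {null}` (with `c(null) = 0`). -/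
def cOpt (n : ℕ) (c : Fin n → ℝ) : Option (Fin n) → ℝ :=
  fun a => a.elim 0 c

/-- Marginal value `f(a | S)` extended to `A ∪ {null}` (with `f(null | S) = 0`). -/
def margOpt (n : ℕ) (f : Finset (Fin n) → ℝ) (a : Option (Fin n))
    (S : Finset (Fin n)) : ℝ :=
  a.elim 0 (fun i => f (insert i S) - f S)

/-- The candidate critical values for the pair `(a1, a2)`. -/
def Cand (n : ℕ) (f : Finset (Fin n) → ℝ) (c : Fin n → ℝ)
    (a1 a2 : Option (Fin n)) : Set ℝ :=
  {α | 0 < α ∧ ∃ S1 S2 : Finset (Fin n),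
    α * margOpt n f a1 S1 - cOpt n c a1 = α * margOpt n f a2 S2 - cOpt n c a2 ∧
    0 ≤ α * margOpt n f a2 S2 - cOpt n c a2}

/-- `c` is generic w.r.t. `f`: for every `α > 0` there is at most one unordered pair
`a1 ≠ a2` in `A ∪ {null}` with `α ∈ Cand_{f,c}(a1, a2)`. -/
def Generic (n : ℕ) (f : Finset (Fin n) → ℝ) (c : Fin n → ℝ) : Prop :=
  ∀ α : ℝ, 0 < α → ∀ a1 a2 a3 a4 : Option (Fin n), a1 ≠ a2 → a3 ≠ a4 →
    α ∈ Cand n f c a1 a2 → α ∈ Cand n f c a3 a4 →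
    (a1 = a3 ∧ a2 = a4) ∨ (a1 = a4 ∧ a2 = a3)

/-- `D*_{f,c}(α)`: the demanded sets maximizing the principal's value `f`. -/
def Dstar (n : ℕ) (f : Finset (Fin n) → ℝ) (c : Fin n → ℝ) (α : ℝ) :
    Set (Finset (Fin n)) :=
  {S | S ∈ Demand n f c α ∧ ∀ T ∈ Demand n f c α, f T ≤ f S}


section AuxNCS
variable {n : ℕ} {f : Finset (Fin n) → ℝ} {c : Fin n → ℝ}

lemma ncs_demand_nonempty (α : ℝ) : (Demand n f c α).Nonempty := by
  obtain ⟨S, hS⟩ := Finite.exists_max (fun S : Finset (Fin n) => α * f S - ∑ a ∈ S, c a)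
  exact ⟨S, hS⟩

lemma ncs_dstar_nonempty (α : ℝ) : ∃ S, S ∈ Dstar n f c α := by
  obtain ⟨S₀, hS₀⟩ := ncs_demand_nonempty (f := f) (c := c) α
  obtain ⟨S, hS, hmax⟩ := Set.exists_max_image (Demand n f c α) f (Set.toFinite _) ⟨S₀, hS₀⟩
  exact ⟨S, hS, hmax⟩

lemma ncs_vfc_eq {α : ℝ} {S : Finset (Fin n)} (hS : S ∈ Dstar n f c α) :
    Vfc n f c α = f S := by
  refine IsGreatest.csSup_eq ⟨⟨S, hS.1, rfl⟩, ?_⟩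
  rintro y ⟨T, hT, rfl⟩
  exact hS.2 T hT

lemma ncs_f_le_f {β γ : ℝ} (hβγ : β < γ) {U W : Finset (Fin n)}
    (hU : U ∈ Demand n f c β) (hW : W ∈ Demand n f c γ) : f U ≤ f W := by
  have h1 := hU W
  have h2 := hW U
  by_contra h
  push_neg at h
  nlinarith [mul_pos (sub_pos.2 hβγ) (sub_pos.2 h)]

lemma ncs_vfc_mono {β γ : ℝ} (h : β ≤ γ) : Vfc n f c β ≤ Vfc n f c γ := by
  rcases eq_or_lt_of_le h with rfl | hlt
  · exact le_refl _
  obtain ⟨Sβ, hSβ⟩ := ncs_dstar_nonempty (f := f) (c := c) β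
  obtain ⟨Sγ, hSγ⟩ := ncs_dstar_nonempty (f := f) (c := c) γ
  rw [ncs_vfc_eq hSβ, ncs_vfc_eq hSγ]
  exact ncs_f_le_f hlt hSβ.1 hSγ.1

/-- GS exchange along a single price raise. -/
lemma ncs_exchange (hc : ∀ a, 0 < c a) (hgs : GrossSubstitutes n f)
    {α : ℝ} (hα : 0 < α) {U W : Finset (Fin n)}
    (hU : U ∈ Demand n f c α) (hW : W ∈ Demand n f c α)
    {b : Fin n} (hbU : b ∈ U) (hbW : b ∉ W) :
    ∃ T ∈ Demand n f c α, b ∉ T ∧ U.erase b ⊆ T ∧ T ⊆ (U.erase b) ∪ W := by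
  classical
  have hα0 : α ≠ 0 := ne_of_gt hα
  set p : Fin n → ℝ := fun i => c i / α with hp
  set q : Fin n → ℝ := fun i => p i + (if i = b ∨ (i ∉ U ∧ i ∉ W) then 1 else 0) with hq
  have hp0 : ∀ i, 0 ≤ p i := fun i => le_of_lt (div_pos (hc i) hα)
  have hpq : ∀ i, p i ≤ q i := by
    intro i
    simp only [hq]
    have : (0:ℝ) ≤ (if i = b ∨ (i ∉ U ∧ i ∉ W) then 1 else 0) := by positivity
    linarith
  have hsump : ∀ R : Finset (Fin n), ∑ i ∈ R, p i = (∑ i ∈ R, c i) / α := by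
    intro R; simp only [hp]; rw [Finset.sum_div]
  have hiff : ∀ R S : Finset (Fin n),
      (f R - ∑ i ∈ R, p i ≤ f S - ∑ i ∈ S, p i) ↔
      (α * f R - ∑ a ∈ R, c a ≤ α * f S - ∑ a ∈ S, c a) := by
    intro R S
    have e : ∀ x y : ℝ, x - y / α = (α * x - y) / α := by
      intro x y; field_simp
    rw [hsump, hsump, e, e, div_le_div_iff_of_pos_right hα]
  have hUp : ∀ R : Finset (Fin n), f R - ∑ i ∈ R, p i ≤ f U - ∑ i ∈ U, p i :=
    fun R => (hiff R U).2 (hU R)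
  obtain ⟨T, hTmax, hTsub⟩ := hgs p q hp0 hpq U hUp
  set pen : Finset (Fin n) → ℝ :=
    fun R => ∑ i ∈ R, (if i = b ∨ (i ∉ U ∧ i ∉ W) then (1:ℝ) else 0) with hpen
  have hsumq : ∀ R : Finset (Fin n), ∑ i ∈ R, q i = (∑ i ∈ R, p i) + pen R := by
    intro R; simp only [hq, hpen]; rw [Finset.sum_add_distrib]
  have hpenW : pen W = 0 := by
    apply Finset.sum_eq_zero
    intro i hi
    rw [if_neg]
    push_neg
    exact ⟨fun h => absurd (h ▸ hi) hbW, fun _ => hi⟩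
  have hpen0 : ∀ R, 0 ≤ pen R := by
    intro R; apply Finset.sum_nonneg; intro i _; positivity
  have hMeq : f W - ∑ i ∈ W, p i = f U - ∑ i ∈ U, p i :=
    le_antisymm (hUp W) ((hiff U W).2 (hW U))
  have hTW := hTmax W
  rw [hsumq, hsumq, hpenW] at hTW
  have hTU : f T - ∑ i ∈ T, p i ≤ f U - ∑ i ∈ U, p i := hUp T
  have hpenT : pen T = 0 := le_antisymm (by linarith [hMeq, hTW, hTU]) (hpen0 T)
  have hTgood : ∀ i ∈ T, ¬(i = b ∨ (i ∉ U ∧ i ∉ W)) := by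
    intro i hi
    have h0 := (Finset.sum_eq_zero_iff_of_nonneg (fun i _ => by positivity)).1 hpenT i hi
    by_contra hcond
    rw [if_pos hcond] at h0
    norm_num at h0
  have hTD : T ∈ Demand n f c α := by
    intro R
    have h1 : f R - ∑ i ∈ R, p i ≤ f T - ∑ i ∈ T, p i := by
      have := hUp R
      have h2 : f W - ∑ i ∈ W, p i ≤ f T - ∑ i ∈ T, p i := by
        have := hpenT ▸ hTW; linarith
      linarith [hMeq]
    exact (hiff R T).1 h1
  refine ⟨T, hTD, ?_, ?_, ?_⟩
  · intro hbT
    exact (hTgood b hbT) (Or.inl rfl)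
  · intro i hi
    rw [Finset.mem_erase] at hi
    apply hTsub i hi.2
    simp only [hq]
    rw [if_neg, add_zero]
    push_neg
    exact ⟨hi.1, fun h => absurd hi.2 h⟩
  · intro i hi
    have := hTgood i hi
    push_neg at this
    rcases this with ⟨hib, hUW⟩
    by_cases hiU : i ∈ U
    · exact Finset.mem_union_left _ (Finset.mem_erase.2 ⟨hib, hiU⟩)
    · exact Finset.mem_union_right _ (hUW hiU)

/-- Two demanded sets related by dropping an element give a (b, null) candidate. -/
lemma ncs_pair_drop {α : ℝ} (hα : 0 < α) {U T : Finset (Fin n)}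
    (hU : U ∈ Demand n f c α) (hT : T ∈ Demand n f c α)
    {b : Fin n} (hbU : b ∈ U) (hTe : T = U.erase b) :
    α ∈ Cand n f c (some b) none := by
  refine ⟨hα, U.erase b, ∅, ?_, ?_⟩
  · have h1 := hU T
    have h2 := hT U
    have hins : insert b (U.erase b) = U := Finset.insert_erase hbU
    have hsum : c b + ∑ a ∈ U.erase b, c a = ∑ a ∈ U, c a :=
      Finset.add_sum_erase U c hbU
    simp only [margOpt, cOpt, Option.elim, hins]
    subst hTe
    linarith
  · simp [margOpt, cOpt]

/-- Two demanded sets related by swapping an element give a (b, x) candidate. -/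
lemma ncs_pair_swap {α : ℝ} (hα : 0 < α) {U T : Finset (Fin n)}
    (hU : U ∈ Demand n f c α) (hT : T ∈ Demand n f c α)
    {b x : Fin n} (hbU : b ∈ U) (hxU : x ∉ U)
    (hTe : T = insert x (U.erase b)) :
    α ∈ Cand n f c (some b) (some x) := by
  have hxE : x ∉ U.erase b := fun h => hxU (Finset.mem_of_mem_erase h)
  have hins : insert b (U.erase b) = U := Finset.insert_erase hbU
  have hsumU : c b + ∑ a ∈ U.erase b, c a = ∑ a ∈ U, c a :=
    Finset.add_sum_erase U c hbU
  have hsumT : ∑ a ∈ T, c a = c x + ∑ a ∈ U.erase b, c a := by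
    rw [hTe]; exact Finset.sum_insert hxE
  have h1 := hU T
  have h2 := hT U
  have h3 := hU (U.erase b)
  refine ⟨hα, U.erase b, U.erase b, ?_, ?_⟩
  · simp only [margOpt, cOpt, Option.elim, hins, ← hTe]
    linarith
  · simp only [margOpt, cOpt, Option.elim, hins, ← hTe]
    linarith

/-- L2: under genericity, the GS exchange drops an element or swaps in exactly one. -/
lemma ncs_exchange_single (hc : ∀ a, 0 < c a) (hgs : GrossSubstitutes n f)
    (hgen : Generic n f c) {α : ℝ} (hα : 0 < α) {U W : Finset (Fin n)}
    (hU : U ∈ Demand n f c α) (hW : W ∈ Demand n f c α)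
    {b : Fin n} (hbU : b ∈ U) (hbW : b ∉ W) :
    ∃ T ∈ Demand n f c α, ∃ o : Option (Fin n),
      α ∈ Cand n f c (some b) o ∧
      ((T = U.erase b ∧ o = none) ∨
       (∃ x, o = some x ∧ x ∈ W ∧ x ∉ U ∧ T = insert x (U.erase b))) := by
  classical
  obtain ⟨T, hTD, hbT, hsub1, hsub2⟩ := ncs_exchange hc hgs hα hU hW hbU hbW
  -- helper : any element of T outside U lies in W
  have hTW : ∀ i ∈ T, i ∉ U → i ∈ W := by
    intro i hi hiU
    rcases Finset.mem_union.1 (hsub2 hi) with h | h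
    · exact absurd (Finset.mem_of_mem_erase h) hiU
    · exact h
  by_cases hTU : T ⊆ U
  · -- T = U.erase b
    have hTe : T = U.erase b := by
      apply Finset.Subset.antisymm
      · intro i hi
        exact Finset.mem_erase.2 ⟨fun h => hbT (h ▸ hi), hTU hi⟩
      · exact hsub1
    exact ⟨T, hTD, none, ncs_pair_drop hα hU hTD hbU hTe, Or.inl ⟨hTe, rfl⟩⟩
  -- otherwise there is x ∈ T \ U
  obtain ⟨x, hxT, hxU⟩ := Finset.not_subset.1 hTU
  by_cases htwo : ∃ y ∈ T, y ∉ U ∧ y ≠ x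
  · -- two distinct outside elements: contradiction with genericity
    exfalso
    obtain ⟨y, hyT, hyU, hyx⟩ := htwo
    -- a sub-procedure producing a candidate pair for each outside element
    have key : ∀ z ∈ T, z ∉ U → ∃ o : Option (Fin n),
        α ∈ Cand n f c (some z) o ∧ (o = none ∨ o = some b) := by
      intro z hzT hzU
      obtain ⟨T2, hT2D, hzT2, hsubA, hsubB⟩ := ncs_exchange hc hgs hα hTD hU hzT hzU
      have hT2cases : T2 = T.erase z ∨ T2 = insert b (T.erase z) := by
        have hsubC : T2 ⊆ insert b (T.erase z) := by
          intro i hi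
          rcases Finset.mem_union.1 (hsubB hi) with h | h
          · exact Finset.mem_insert_of_mem h
          · -- i ∈ U; if i ≠ b then i ∈ U.erase b ⊆ T
            by_cases hib : i = b
            · exact hib ▸ Finset.mem_insert_self _ _
            · have : i ∈ T := hsub1 (Finset.mem_erase.2 ⟨hib, h⟩)
              have hiz : i ≠ z := fun h' => hzT2 (h' ▸ hi)
              exact Finset.mem_insert_of_mem (Finset.mem_erase.2 ⟨hiz, this⟩)
        by_cases hbT2 : b ∈ T2
        · right
          apply Finset.Subset.antisymm hsubC
          intro i hi
          rcases Finset.mem_insert.1 hi with h | h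
          · exact h ▸ hbT2
          · exact hsubA h
        · left
          apply Finset.Subset.antisymm
          · intro i hi
            rcases Finset.mem_insert.1 (hsubC hi) with h | h
            · exact absurd (h ▸ hi) hbT2
            · exact h
          · exact hsubA
      rcases hT2cases with hcase | hcase
      · exact ⟨none, ncs_pair_drop hα hTD hT2D hzT hcase, Or.inl rfl⟩
      · exact ⟨some b, ncs_pair_swap hα hTD hT2D hzT hbT hcase, Or.inr rfl⟩
    obtain ⟨o1, hc1, ho1⟩ := key x hxT hxU
    obtain ⟨o2, hc2, ho2⟩ := key y hyT hyU
    have hne1 : (some x : Option (Fin n)) ≠ o1 := by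
      rcases ho1 with rfl | rfl
      · simp
      · simp only [ne_eq, Option.some.injEq]
        exact fun h => hxU (h ▸ hbU)
    have hne2 : (some y : Option (Fin n)) ≠ o2 := by
      rcases ho2 with rfl | rfl
      · simp
      · simp only [ne_eq, Option.some.injEq]
        exact fun h => hyU (h ▸ hbU)
    rcases hgen α hα (some x) o1 (some y) o2 hne1 hne2 hc1 hc2 with ⟨h1, _⟩ | ⟨h1, _⟩
    · exact hyx (Option.some.inj h1).symm
    · rcases ho2 with rfl | rfl
      · exact Option.some_ne_none _ h1
      · exact hxU ((Option.some.inj h1) ▸ hbU)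
  · -- unique outside element x : T = insert x (U.erase b)
    push_neg at htwo
    have hTe : T = insert x (U.erase b) := by
      apply Finset.Subset.antisymm
      · intro i hi
        by_cases hiU : i ∈ U
        · have hib : i ≠ b := fun h => hbT (h ▸ hi)
          exact Finset.mem_insert_of_mem (Finset.mem_erase.2 ⟨hib, hiU⟩)
        · rw [htwo i hi hiU]
          exact Finset.mem_insert_self _ _
      · intro i hi
        rcases Finset.mem_insert.1 hi with rfl | h
        · exact hxT
        · exact hsub1 h
    exact ⟨T, hTD, some x, ncs_pair_swap hα hU hTD hbU hxU hTe,
      Or.inr ⟨x, rfl, hTW x hxT hxU, hxU, hTe⟩⟩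

end AuxNCS

/-- For gross substitutes `f` and generic `c`, at neighboring critical values `α' < α`
the principal-optimal demanded set either loses a single action, or swaps an action
for a strictly cheaper one. -/
theorem neighboring_criticals_structure (n : ℕ) (f : Finset (Fin n) → ℝ) (c : Fin n → ℝ)
    (hf0 : f ∅ = 0) (hmono : ∀ S T : Finset (Fin n), S ⊆ T → f S ≤ f T)
    (hf01 : ∀ S : Finset (Fin n), 0 ≤ f S ∧ f S ≤ 1) (hc : ∀ a : Fin n, 0 < c a)
    (hgs : GrossSubstitutes n f) (hgen : Generic n f c)
    (α' α : ℝ) (hα' : α' ∈ Critical n f c) (hα : α ∈ Critical n f c)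
    (hlt : α' < α) (hnb : Set.Ioo α' α ∩ Critical n f c = ∅) :
    ∃ S ∈ Dstar n f c α, ∃ S' ∈ Dstar n f c α',
      (∃ a ∈ S, S' = S.erase a) ∨
      (∃ a1 ∈ S, ∃ a2 : Fin n, a2 ∉ S ∧ c a2 < c a1 ∧
        S' = insert a2 (S.erase a1)) := by
  classical
  have hα'pos : 0 < α' := hα'.1
  obtain ⟨hαpos, hα1, hcrit⟩ := hα
  obtain ⟨S', hS'⟩ := ncs_dstar_nonempty (f := f) (c := c) α'
  have hVα' : Vfc n f c α' = f S' := ncs_vfc_eq hS'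
  set ε : ℝ := (α - α') / 2 with hε
  have hεpos : 0 < ε := by rw [hε]; linarith
  have hεα : ε ≤ α := by rw [hε]; linarith
  have hβmid1 : α' ≤ α - ε := by rw [hε]; linarith
  have hβmid2 : α - ε < α := by linarith
  -- there exists a set of value exceeding f S'
  have hfam : ∃ U : Finset (Fin n), f S' < f U := by
    by_contra hno
    push_neg at hno
    have hVα : Vfc n f c α = f S' := by
      obtain ⟨S, hS⟩ := ncs_dstar_nonempty (f := f) (c := c) α
      have h2 : f S' ≤ Vfc n f c α := by
        rw [← hVα']; exact ncs_vfc_mono (le_of_lt hlt)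
      rw [ncs_vfc_eq hS] at h2 ⊢
      exact le_antisymm (hno S) h2
    have hVβ : Vfc n f c (α - ε) = f S' := by
      have h1 : Vfc n f c (α - ε) ≤ Vfc n f c α := ncs_vfc_mono (by linarith)
      have h2 : f S' ≤ Vfc n f c (α - ε) := by
        rw [← hVα']; exact ncs_vfc_mono hβmid1
      rw [hVα] at h1
      exact le_antisymm h1 h2
    exact hcrit ε hεpos hεα (hVβ.trans hVα.symm)
  obtain ⟨U₀, hU₀⟩ := hfam
  set F : Finset (Finset (Fin n)) := Finset.univ.filter (fun U => f S' < f U) with hF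
  have hmemF : ∀ U, U ∈ F ↔ f S' < f U := by intro U; simp [hF]
  set xfn : Finset (Fin n) → ℝ :=
    fun U => (∑ a ∈ U, c a - ∑ a ∈ S', c a) / (f U - f S') with hxfn
  obtain ⟨Ustar, hUstarF, hUstarmin⟩ := F.exists_min_image xfn ⟨U₀, (hmemF U₀).2 hU₀⟩
  set r := xfn Ustar with hr
  have hrmin : ∀ U ∈ F, r ≤ xfn U := hUstarmin
  have hfUstar : f S' < f Ustar := (hmemF Ustar).1 hUstarF
  have hxge : ∀ U ∈ F, α' ≤ xfn U := by
    intro U hUF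
    have hfU : f S' < f U := (hmemF U).1 hUF
    have h1 := hS'.1 U
    rw [hxfn]
    rw [le_div_iff₀ (by linarith : (0:ℝ) < f U - f S')]
    nlinarith [h1]
  have hrge : α' ≤ r := hxge Ustar hUstarF
  -- S' is demanded on [α', r]
  have hSin : ∀ β, α' ≤ β → β ≤ r → S' ∈ Demand n f c β := by
    intro β h1 h2 T
    by_cases hT : f S' < f T
    · have h3 : β ≤ xfn T := le_trans h2 (hrmin T ((hmemF T).2 hT))
      rw [hxfn, le_div_iff₀ (by linarith : (0:ℝ) < f T - f S')] at h3
      nlinarith [h3]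
    · push_neg at hT
      have h4 := hS'.1 T
      nlinarith [mul_nonneg (by linarith : (0:ℝ) ≤ β - α')
        (by linarith : (0:ℝ) ≤ f S' - f T)]
  -- V equals f S' on [α', r)
  have hVlt : ∀ β, α' ≤ β → β < r → Vfc n f c β = f S' := by
    intro β h1 h2
    have hSβ : S' ∈ Demand n f c β := hSin β h1 (le_of_lt h2)
    refine IsGreatest.csSup_eq ⟨⟨S', hSβ, rfl⟩, ?_⟩
    rintro y ⟨T, hT, rfl⟩
    by_contra hy
    push_neg at hy
    have h3 : β < xfn T := lt_of_lt_of_le h2 (hrmin T ((hmemF T).2 hy))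
    rw [hxfn, lt_div_iff₀ (by linarith : (0:ℝ) < f T - f S')] at h3
    have h5 := hT S'
    nlinarith
  -- r is at least α (else r would be a critical value in (α', α))
  have hαr : α ≤ r := by
    by_contra hra
    push_neg at hra
    have hα'r : α' < r := by
      rcases lt_or_eq_of_le hrge with h | h
      · exact h
      · exfalso
        have hd : f Ustar - f S' ≠ 0 := by linarith
        have h' : α' = (∑ a ∈ Ustar, c a - ∑ a ∈ S', c a) / (f Ustar - f S') := by
          rw [h, hr, hxfn]
        rw [eq_div_iff hd] at h'
        have hUD : Ustar ∈ Demand n f c α' := by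
          intro T
          have := hS'.1 T
          nlinarith [h']
        have := hS'.2 Ustar hUD
        linarith
    have hd : f Ustar - f S' ≠ 0 := by linarith
    have hUeqr : r * (f Ustar - f S') = ∑ a ∈ Ustar, c a - ∑ a ∈ S', c a := by
      rw [hr, hxfn]
      field_simp
    have hS'r : S' ∈ Demand n f c r := hSin r hrge le_rfl
    have hUDr : Ustar ∈ Demand n f c r := by
      intro T
      have := hS'r T
      nlinarith [hUeqr]
    have hrcrit : r ∈ Critical n f c := by
      refine ⟨lt_of_lt_of_le hα'pos hrge, le_trans (le_of_lt hra) hα1, ?_⟩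
      intro δ hδ hδr
      have hVr : f Ustar ≤ Vfc n f c r := by
        obtain ⟨Sr, hSr⟩ := ncs_dstar_nonempty (f := f) (c := c) r
        rw [ncs_vfc_eq hSr]
        exact hSr.2 Ustar hUDr
      have hVless : Vfc n f c (r - δ) ≤ f S' := by
        by_cases hcmp : α' ≤ r - δ
        · exact le_of_eq (hVlt (r - δ) hcmp (by linarith))
        · push_neg at hcmp
          calc Vfc n f c (r - δ) ≤ Vfc n f c α' := ncs_vfc_mono (le_of_lt hcmp)
            _ = f S' := hVα'
      exact ne_of_lt (lt_of_le_of_lt hVless (lt_of_lt_of_le hfUstar hVr))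
    exact Set.eq_empty_iff_forall_notMem.1 hnb r ⟨⟨hα'r, hra⟩, hrcrit⟩
  -- consequences
  have hS'Dα : S' ∈ Demand n f c α := hSin α (le_of_lt hlt) hαr
  have hmin : ∀ T ∈ Demand n f c α, f S' ≤ f T := by
    intro T hT
    exact ncs_f_le_f hβmid2 (hSin (α - ε) hβmid1 (by linarith)) hT
  have hVαε : Vfc n f c (α - ε) = f S' := hVlt (α - ε) hβmid1 (lt_of_lt_of_le hβmid2 hαr)
  have hVne := hcrit ε hεpos hεα
  obtain ⟨S, hS⟩ := ncs_dstar_nonempty (f := f) (c := c) α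
  have hfS : f S' < f S := by
    rcases lt_or_eq_of_le (hmin S hS.1) with h | h
    · exact h
    · exfalso
      apply hVne
      rw [hVαε, ncs_vfc_eq hS, ← h]
  have hJ : ∃ a, a ∈ S ∧ a ∉ S' := by
    by_contra hno
    push_neg at hno
    exact absurd (hmono S S' (fun i hi => hno i hi)) (not_le.2 hfS)
  obtain ⟨a, haS, haS'⟩ := hJ
  obtain ⟨T', hT'D, o, hCand1, hcase1⟩ :=
    ncs_exchange_single hc hgs hgen hαpos hS.1 hS'Dα haS haS'
  have haT' : a ∉ T' := by
    rcases hcase1 with ⟨rfl, _⟩ | ⟨x, _, hxS', hxS, rfl⟩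
    · exact Finset.notMem_erase a S
    · intro h
      rcases Finset.mem_insert.1 h with h | h
      · exact haS' (by rw [h]; exact hxS')
      · exact Finset.notMem_erase a S h
  have hsubS' : T' ⊆ S' := by
    by_contra hnsub
    obtain ⟨a'', ha''T, ha''S'⟩ := Finset.not_subset.1 hnsub
    obtain ⟨T'', hT''D, o'', hCand2, hcase2⟩ :=
      ncs_exchange_single hc hgs hgen hαpos hT'D hS'Dα ha''T ha''S'
    have hne1 : (some a : Option (Fin n)) ≠ o := by
      rcases hcase1 with ⟨_, rfl⟩ | ⟨x, rfl, hxS', _, _⟩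
      · simp
      · simp only [ne_eq, Option.some.injEq]
        exact fun h => haS' (by rw [h]; exact hxS')
    have hne2 : (some a'' : Option (Fin n)) ≠ o'' := by
      rcases hcase2 with ⟨_, rfl⟩ | ⟨x, rfl, hxS', _, _⟩
      · simp
      · simp only [ne_eq, Option.some.injEq]
        exact fun h => ha''S' (by rw [h]; exact hxS')
    rcases hgen α hαpos (some a) o (some a'') o'' hne1 hne2 hCand1 hCand2 with ⟨h1, _⟩ | ⟨h1, _⟩
    · exact haT' (by rw [Option.some.inj h1]; exact ha''T)
    · rcases hcase2 with ⟨_, rfl⟩ | ⟨x, rfl, hxS', _, _⟩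
      · exact Option.some_ne_none _ h1
      · exact haS' (by rw [Option.some.inj h1]; exact hxS')
  have hfT' : f T' = f S' := le_antisymm (hmono T' S' hsubS') (hmin T' hT'D)
  have hcT' : ∑ i ∈ T', c i = ∑ i ∈ S', c i := by
    have heq : α * f S' - ∑ i ∈ S', c i = α * f T' - ∑ i ∈ T', c i :=
      le_antisymm (hT'D S') (hS'Dα T')
    rw [hfT'] at heq
    linarith
  have hT'Dα' : T' ∈ Demand n f c α' := by
    intro R
    have hh := hS'.1 R
    rw [hfT', hcT']
    exact hh
  have hT'star : T' ∈ Dstar n f c α' :=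
    ⟨hT'Dα', fun R hR => le_trans (hS'.2 R hR) (le_of_eq hfT'.symm)⟩
  refine ⟨S, hS, T', hT'star, ?_⟩
  rcases hcase1 with ⟨hTe, _⟩ | ⟨x, _, hxS', hxS, hTe⟩
  · exact Or.inl ⟨a, haS, hTe⟩
  · refine Or.inr ⟨a, haS, x, hxS, ?_, hTe⟩
    have hxE : x ∉ S.erase a := fun h => hxS (Finset.mem_of_mem_erase h)
    have hsumT : ∑ i ∈ T', c i = c x + ∑ i ∈ S.erase a, c i := by
      rw [hTe]; exact Finset.sum_insert hxE
    have hsumS : c a + ∑ i ∈ S.erase a, c i = ∑ i ∈ S, c i := Finset.add_sum_erase S c haS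
    have hu : α * f S - ∑ i ∈ S, c i = α * f T' - ∑ i ∈ T', c i :=
      le_antisymm (hT'D S) (hS.1 T')
    have hflt : f T' < f S := by rw [hfT']; exact hfS
    nlinarith [mul_pos hαpos (sub_pos.2 hflt), hu, hsumT, hsumS]
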